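/- Let f, g : E^{m,n} → A be functions into a ring A satisfying all Plücker-type relations, and let (I|J) ∈ E^{m,n} be such that I is not an interval, f(I'|J') = g(I'|J') for all corteges (I'|J') with σ(I',J') < σ(I,J), where σ(I,J) := max I − min I + max J − min J, and some value f(Aj|B) appearing in the relevant Plücker relation is nonzero and not a zero divisor. Then f(I|J) = g(I|J). -/

import Mathlib

open Finset

/-- `(I|J)` is a cortege of `E^{m,n}`. -/
def Cortege (m n : ℕ) (I J : Finset ℕ) : Prop :=
  I ⊆ Finset.Icc 1 m ∧ J ⊆ Finset.Icc 1 n ∧ I.card = J.card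

/-- `h` satisfies all Plücker-type relations with triples. -/
def PlueckerRel {R : Type*} [Ring R] (m n : ℕ)
    (h : Finset ℕ → Finset ℕ → R) : Prop :=
  ∀ (A B : Finset ℕ) (i j k l : ℕ),
    A ⊆ Finset.Icc 1 m → B ⊆ Finset.Icc 1 n →
    i ∈ Finset.Icc 1 m → j ∈ Finset.Icc 1 m → k ∈ Finset.Icc 1 m →
    l ∈ Finset.Icc 1 n →
    i ∉ A → j ∉ A → k ∉ A → l ∉ B → i < j → j < k → A.card + 1 = B.card →
    h (insert j A) B * h (insert i (insert k A)) (insert l B) =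
      h (insert i (insert j A)) (insert l B) * h (insert k A) B +
      h (insert j (insert k A)) (insert l B) * h (insert i A) B

/-- The minimum of a finite set of naturals (0 on the empty set). -/
def minN (S : Finset ℕ) : ℕ := if h : S.Nonempty then S.min' h else 0

/-- The maximum of a finite set of naturals (0 on the empty set). -/
def maxN (S : Finset ℕ) : ℕ := if h : S.Nonempty then S.max' h else 0

/-- `σ(I,J) = max I − min I + max J − min J`. -/
def sigmaIJ (I J : Finset ℕ) : ℕ := (maxN I - minN I) + (maxN J - minN J)

lemma bounds_aux {S : Finset ℕ} (hS : S.Nonempty) {a b : ℕ}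
    (h : ∀ x ∈ S, a ≤ x ∧ x ≤ b) :
    a ≤ minN S ∧ maxN S ≤ b ∧ minN S ≤ maxN S := by
  simp only [minN, maxN, dif_pos hS]
  exact ⟨(h _ (S.min'_mem hS)).1, (h _ (S.max'_mem hS)).2, S.min'_le _ (S.max'_mem hS)⟩

lemma sub_le_aux {S T : Finset ℕ} (h : S ⊆ T) :
    maxN S - minN S ≤ maxN T - minN T := by
  rcases S.eq_empty_or_nonempty with rfl | hS
  · simp [minN, maxN]
  · have hT : T.Nonempty := hS.mono h
    simp only [minN, maxN, dif_pos hS, dif_pos hT]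
    have h1 := T.min'_le _ (h (S.min'_mem hS))
    have h2 := T.le_max' _ (h (S.max'_mem hS))
    have h3 := S.min'_le _ (S.max'_mem hS)
    omega

/-- induction step, Case 1: if `f, g` satisfy all Plücker-type
relations, `(I|J)` is a cortege with `I` not an interval, `f` and `g` agree on
all corteges of smaller `σ`, and for some `j` with `min I < j < max I`,
`j ∉ I`, and some `ℓ ∈ J` the value `f(Aj|B)` (where `A = I \ {min I, max I}`,
`B = J \ {ℓ}`) is nonzero and not a zero divisor, then `f(I|J) = g(I|J)`. -/
theorem stmt10 {R : Type*} [Ring R] (m n : ℕ)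
    (f g : Finset ℕ → Finset ℕ → R)
    (hfP : PlueckerRel m n f) (hgP : PlueckerRel m n g)
    (I J : Finset ℕ) (hIJ : Cortege m n I J)
    (hInotint : ¬ ∃ a b, I = Finset.Icc a b)
    (hcoinc : ∀ I' J', Cortege m n I' J' →
      sigmaIJ I' J' < sigmaIJ I J → f I' J' = g I' J')
    (hreg : ∃ j, minN I < j ∧ j < maxN I ∧ j ∉ I ∧ ∃ l ∈ J,
      (f (insert j ((I.erase (minN I)).erase (maxN I))) (J.erase l) ≠ 0 ∧
       (∀ x : R, f (insert j ((I.erase (minN I)).erase (maxN I))) (J.erase l) * x = 0 → x = 0) ∧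
       (∀ x : R, x * f (insert j ((I.erase (minN I)).erase (maxN I))) (J.erase l) = 0 → x = 0))) :
    f I J = g I J := by
  obtain ⟨j, hij, hjk, hjI, l, hlJ, hf0, hfl, hfr⟩ := hreg
  have hik : minN I < maxN I := hij.trans hjk
  have hI : I.Nonempty := by
    rcases I.eq_empty_or_nonempty with rfl | h
    · simp [minN, maxN] at hik
    · exact h
  have hminI : minN I = I.min' hI := by simp [minN, dif_pos hI]
  have hmaxI : maxN I = I.max' hI := by simp [maxN, dif_pos hI]
  have hi_mem : minN I ∈ I := by rw [hminI]; exact I.min'_mem hI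
  have hk_mem : maxN I ∈ I := by rw [hmaxI]; exact I.max'_mem hI
  obtain ⟨hIm, hJn, hcardIJ⟩ := hIJ
  set A := (I.erase (minN I)).erase (maxN I) with hA_def
  set B := J.erase l with hB_def
  have hAI : A ⊆ I := (erase_subset _ _).trans (erase_subset _ _)
  have hBJ : B ⊆ J := erase_subset _ _
  have hAmem : ∀ x ∈ A, minN I < x ∧ x < maxN I := by
    intro x hx
    rw [hA_def] at hx
    simp only [mem_erase] at hx
    obtain ⟨hxk, hxi, hxI⟩ := hx
    constructor
    · exact lt_of_le_of_ne (hminI ▸ I.min'_le x hxI) (Ne.symm hxi)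
    · exact lt_of_le_of_ne (hmaxI ▸ I.le_max' x hxI) hxk
  have hiA : minN I ∉ A := fun h => absurd (hAmem _ h).1 (lt_irrefl _)
  have hkA : maxN I ∉ A := fun h => absurd (hAmem _ h).2 (lt_irrefl _)
  have hjA : j ∉ A := fun h => hjI (hAI h)
  have hlB : l ∉ B := notMem_erase _ _
  have hkA' : maxN I ∈ I.erase (minN I) := mem_erase.mpr ⟨hik.ne', hk_mem⟩
  have hIeq : insert (minN I) (insert (maxN I) A) = I := by
    rw [hA_def, insert_erase hkA', insert_erase hi_mem]
  have hJeq : insert l B = J := insert_erase hlJ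
  have cA : A.card + 2 = I.card := by
    have h1 := card_erase_add_one hkA'
    have h2 := card_erase_add_one hi_mem
    rw [← hA_def] at h1
    omega
  have cB : B.card + 1 = J.card := by
    have := card_erase_add_one hlJ
    rw [← hB_def] at this
    omega
  have hcardAB : A.card + 1 = B.card := by omega
  have hi_Icc := mem_Icc.mp (hIm hi_mem)
  have hk_Icc := mem_Icc.mp (hIm hk_mem)
  have hjm : j ∈ Finset.Icc 1 m := mem_Icc.mpr ⟨by omega, by omega⟩
  have hAIcc : A ⊆ Finset.Icc 1 m := hAI.trans hIm
  have hBIcc : B ⊆ Finset.Icc 1 n := hBJ.trans hJn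
  have hln : l ∈ Finset.Icc 1 n := hJn hlJ
  have hrelf := hfP A B (minN I) j (maxN I) l hAIcc hBIcc (hIm hi_mem) hjm
    (hIm hk_mem) hln hiA hjA hkA hlB hij hjk hcardAB
  have hrelg := hgP A B (minN I) j (maxN I) l hAIcc hBIcc (hIm hi_mem) hjm
    (hIm hk_mem) hln hiA hjA hkA hlB hij hjk hcardAB
  rw [hJeq, hIeq] at hrelf hrelg
  have hσJ : maxN B - minN B ≤ maxN J - minN J := sub_le_aux hBJ
  -- the five coincidences
  have e1 : f (insert j A) B = g (insert j A) B := by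
    apply hcoinc
    · exact ⟨insert_subset hjm hAIcc, hBIcc, by rw [card_insert_of_notMem hjA]; omega⟩
    · have hb : ∀ x ∈ insert j A, minN I + 1 ≤ x ∧ x ≤ maxN I - 1 := by
        intro x hx
        rcases mem_insert.mp hx with rfl | hxA
        · omega
        · have := hAmem x hxA; omega
      obtain ⟨b1, b2, b3⟩ := bounds_aux (insert_nonempty _ _) hb
      simp only [sigmaIJ]
      omega
  have hi_jA : minN I ∉ insert j A := by
    simp only [mem_insert, not_or]
    exact ⟨by omega, hiA⟩
  have e2 : f (insert (minN I) (insert j A)) J = g (insert (minN I) (insert j A)) J := by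
    apply hcoinc
    · refine ⟨insert_subset (hIm hi_mem) (insert_subset hjm hAIcc), hJn, ?_⟩
      rw [card_insert_of_notMem hi_jA, card_insert_of_notMem hjA]; omega
    · have hb : ∀ x ∈ insert (minN I) (insert j A), minN I ≤ x ∧ x ≤ maxN I - 1 := by
        intro x hx
        rcases mem_insert.mp hx with rfl | hx
        · omega
        rcases mem_insert.mp hx with rfl | hxA
        · omega
        · have := hAmem x hxA; omega
      obtain ⟨b1, b2, b3⟩ := bounds_aux (insert_nonempty _ _) hb
      simp only [sigmaIJ]
      omega
  have e3 : f (insert (maxN I) A) B = g (insert (maxN I) A) B := by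
    apply hcoinc
    · exact ⟨insert_subset (hIm hk_mem) hAIcc, hBIcc,
        by rw [card_insert_of_notMem hkA]; omega⟩
    · have hb : ∀ x ∈ insert (maxN I) A, minN I + 1 ≤ x ∧ x ≤ maxN I := by
        intro x hx
        rcases mem_insert.mp hx with rfl | hxA
        · omega
        · have := hAmem x hxA; omega
      obtain ⟨b1, b2, b3⟩ := bounds_aux (insert_nonempty _ _) hb
      simp only [sigmaIJ]
      omega
  have hj_kA : j ∉ insert (maxN I) A := by
    simp only [mem_insert, not_or]
    exact ⟨by omega, hjA⟩
  have e4 : f (insert j (insert (maxN I) A)) J = g (insert j (insert (maxN I) A)) J := by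
    apply hcoinc
    · refine ⟨insert_subset hjm (insert_subset (hIm hk_mem) hAIcc), hJn, ?_⟩
      rw [card_insert_of_notMem hj_kA, card_insert_of_notMem hkA]; omega
    · have hb : ∀ x ∈ insert j (insert (maxN I) A), minN I + 1 ≤ x ∧ x ≤ maxN I := by
        intro x hx
        rcases mem_insert.mp hx with rfl | hx
        · omega
        rcases mem_insert.mp hx with rfl | hxA
        · omega
        · have := hAmem x hxA; omega
      obtain ⟨b1, b2, b3⟩ := bounds_aux (insert_nonempty _ _) hb
      simp only [sigmaIJ]
      omega
  have e5 : f (insert (minN I) A) B = g (insert (minN I) A) B := by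
    apply hcoinc
    · exact ⟨insert_subset (hIm hi_mem) hAIcc, hBIcc,
        by rw [card_insert_of_notMem hiA]; omega⟩
    · have hb : ∀ x ∈ insert (minN I) A, minN I ≤ x ∧ x ≤ maxN I - 1 := by
        intro x hx
        rcases mem_insert.mp hx with rfl | hxA
        · omega
        · have := hAmem x hxA; omega
      obtain ⟨b1, b2, b3⟩ := bounds_aux (insert_nonempty _ _) hb
      simp only [sigmaIJ]
      omega
  rw [e1, e2, e3, e4, e5, ← hrelg, ← e1] at hrelf
  -- hrelf : f (insert j A) B * f I J = f (insert j A) B * g I J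
  have hz : f (insert j A) B * (f I J - g I J) = 0 := by
    rw [mul_sub, hrelf, sub_self]
  exact sub_eq_zero.mp (hfl _ hz)
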